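/- For every γ with 0 < γ < 1/L, inf_{u ∈ E} φ(u) = inf_{u ∈ E} φ_γ(u) (Proposition 1(iv), infimum part). -/

import Mathlib

open scoped RealInnerProductSpace
open Filter Topology Asymptotics

/-- Moreau envelope `g^γ(v) = inf_w { g(w) + (1/(2γ))‖w − v‖² }` of an
extended-real-valued function `g`. -/
noncomputable def moreauEnv {E : Type*} [NormedAddCommGroup E] [InnerProductSpace ℝ E]
    (g : E → EReal) (γ : ℝ) (v : E) : EReal :=
  ⨅ w : E, g w + (((1 / (2 * γ)) * ‖w - v‖ ^ 2 : ℝ) : EReal)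

/-- The (set-valued) proximal mapping
`prox_{γg}(v) = argmin_w { g(w) + (1/(2γ))‖w − v‖² }`. -/
def proxSet {E : Type*} [NormedAddCommGroup E] [InnerProductSpace ℝ E]
    (g : E → EReal) (γ : ℝ) (v : E) : Set E :=
  {w | ∀ w' : E, g w + (((1 / (2 * γ)) * ‖w - v‖ ^ 2 : ℝ) : EReal)
      ≤ g w' + (((1 / (2 * γ)) * ‖w' - v‖ ^ 2 : ℝ) : EReal)}

/-- The forward–backward envelope
`φ_γ(u) = ℓ(u) − (γ/2)‖∇ℓ(u)‖² + g^γ(u − γ∇ℓ(u))`, where `l'` plays the role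
of the gradient `∇ℓ`. -/
noncomputable def fbe {E : Type*} [NormedAddCommGroup E] [InnerProductSpace ℝ E]
    (l : E → ℝ) (l' : E → E) (g : E → EReal) (γ : ℝ) (u : E) : EReal :=
  ((l u - (γ / 2) * ‖l' u‖ ^ 2 : ℝ) : EReal) + moreauEnv g γ (u - γ • l' u)

/-- Adding a finite real constant commutes with `iInf` on `EReal`. -/
lemma ereal_coe_add_iInf {ι : Sort*} (c : ℝ) (f : ι → EReal) :
    (c : EReal) + ⨅ i, f i = ⨅ i, ((c : EReal) + f i) := by
  refine le_antisymm (le_iInf fun i => add_le_add_right (iInf_le f i) _) ?_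
  rw [add_comm]
  rw [← EReal.sub_le_iff_le_add (Or.inl (EReal.coe_ne_bot c)) (Or.inl (EReal.coe_ne_top c))]
  refine le_iInf fun i => ?_
  rw [EReal.sub_le_iff_le_add (Or.inl (EReal.coe_ne_bot c)) (Or.inl (EReal.coe_ne_top c))]
  exact (iInf_le _ i).trans (le_of_eq (add_comm _ _))

/-- The descent lemma for functions with `L`-Lipschitz gradient. -/
lemma descent_lemma {E : Type*} [NormedAddCommGroup E] [InnerProductSpace ℝ E] [CompleteSpace E]
    (l : E → ℝ) (l' : E → E) (L : ℝ) (hL : 0 ≤ L)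
    (hgrad : ∀ x : E, HasGradientAt l (l' x) x)
    (hlip : ∀ x y : E, ‖l' x - l' y‖ ≤ L * ‖x - y‖) (u w : E) :
    l w ≤ l u + ⟪l' u, w - u⟫ + L / 2 * ‖w - u‖ ^ 2 := by
  set d := w - u with hd
  set h : ℝ → ℝ := fun t => l (u + t • d) - t * ⟪l' u, d⟫ - L / 2 * t ^ 2 * ‖d‖ ^ 2 with hh
  have hderiv : ∀ t : ℝ, HasDerivAt h
      (⟪l' (u + t • d), d⟫ - ⟪l' u, d⟫ - L * t * ‖d‖ ^ 2) t := by
    intro t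
    have hc : HasDerivAt (fun t : ℝ => u + t • d) d t := by
      simpa using ((hasDerivAt_id t).smul_const d).const_add u
    have h1 : HasDerivAt (fun t : ℝ => l (u + t • d)) ⟪l' (u + t • d), d⟫ t := by
      have := (hasGradientAt_iff_hasFDerivAt.mp (hgrad (u + t • d))).comp_hasDerivAt t hc
      simp [InnerProductSpace.toDual_apply_apply] at this
      exact this
    have h2 : HasDerivAt (fun t : ℝ => t * ⟪l' u, d⟫) ⟪l' u, d⟫ t := by
      simpa using (hasDerivAt_id t).mul_const ⟪l' u, d⟫
    have h3 : HasDerivAt (fun t : ℝ => L / 2 * t ^ 2 * ‖d‖ ^ 2) (L * t * ‖d‖ ^ 2) t := by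
      have := ((hasDerivAt_pow 2 t).const_mul (L / 2)).mul_const (‖d‖ ^ 2)
      refine this.congr_deriv ?_
      rw [show (2:ℕ) - 1 = 1 from rfl]
      push_cast
      ring
    exact (h1.sub h2).sub h3
  have hmono : AntitoneOn h (Set.Icc (0 : ℝ) 1) := by
    refine antitoneOn_of_deriv_nonpos (convex_Icc 0 1)
      (fun t _ => ((hderiv t).continuousAt).continuousWithinAt)
      (fun t _ => ((hderiv t).differentiableAt).differentiableWithinAt) (fun t ht => ?_)
    rw [interior_Icc] at ht
    rw [(hderiv t).deriv]
    have hineq : ⟪l' (u + t • d) - l' u, d⟫ ≤ L * t * ‖d‖ ^ 2 := by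
      calc ⟪l' (u + t • d) - l' u, d⟫ ≤ ‖l' (u + t • d) - l' u‖ * ‖d‖ :=
            real_inner_le_norm _ _
        _ ≤ (L * ‖(u + t • d) - u‖) * ‖d‖ :=
            mul_le_mul_of_nonneg_right (hlip _ _) (norm_nonneg _)
        _ = L * t * ‖d‖ ^ 2 := by
            rw [add_sub_cancel_left, norm_smul, Real.norm_eq_abs, abs_of_pos ht.1]
            ring
    rw [inner_sub_left] at hineq
    linarith
  have h10 := hmono (Set.left_mem_Icc.mpr zero_le_one) (Set.right_mem_Icc.mpr zero_le_one)
    zero_le_one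
  simp only [hh, one_smul, zero_smul, add_zero, zero_mul, zero_pow, mul_zero, sub_zero,
    one_pow, mul_one, one_mul] at h10
  have : u + d = w := by rw [hd]; abel
  rw [this] at h10
  linarith

/-- Rewriting the FBE as a single infimum. -/
lemma fbe_eq_iInf {E : Type*} [NormedAddCommGroup E] [InnerProductSpace ℝ E]
    (l : E → ℝ) (l' : E → E) (g : E → EReal) (γ : ℝ) (hγ : 0 < γ) (u : E) :
    fbe l l' g γ u = ⨅ w : E,
      (((l u + ⟪l' u, w - u⟫ + (1 / (2 * γ)) * ‖w - u‖ ^ 2 : ℝ) : EReal) + g w) := by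
  rw [fbe, moreauEnv, ereal_coe_add_iInf]
  congr 1
  funext w
  rw [add_comm (g w), ← add_assoc, ← EReal.coe_add]
  congr 2
  have hv : w - (u - γ • l' u) = (w - u) + γ • l' u := by abel
  rw [hv, norm_add_sq_real, real_inner_smul_right, norm_smul, Real.norm_eq_abs,
    abs_of_pos hγ, real_inner_comm]
  field_simp
  ring

/-- for `0 < γ < 1/L`, `inf φ = inf φ_γ`. -/
theorem iInf_cost_eq_iInf_fbe
    {E : Type*} [NormedAddCommGroup E] [InnerProductSpace ℝ E] [FiniteDimensional ℝ E]
    (l : E → ℝ) (l' : E → E) (g : E → EReal) (L γ : ℝ)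
    (hL : 0 < L) (hγ : 0 < γ)
    (hgrad : ∀ x : E, HasGradientAt l (l' x) x)
    (hlip : ∀ x y : E, ‖l' x - l' y‖ ≤ L * ‖x - y‖)
    (hproper : ∃ x : E, g x ≠ ⊤) (hbot : ∀ x : E, g x ≠ ⊥)
    (hlsc : LowerSemicontinuous g)
    (hbdd : ∃ m : ℝ, ∀ x : E, (m : EReal) ≤ g x)
    (hγL : γ < 1 / L) :
    (⨅ u : E, ((l u : EReal) + g u)) = ⨅ u : E, fbe l l' g γ u := by
  have hLγ : L ≤ 1 / γ := by
    rw [le_div_iff₀ hγ]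
    rw [lt_div_iff₀ hL] at hγL
    linarith
  apply le_antisymm
  · refine le_iInf fun u => ?_
    rw [fbe_eq_iInf l l' g γ hγ u]
    refine le_iInf fun w => iInf_le_of_le w ?_
    have hr : l w ≤ l u + ⟪l' u, w - u⟫ + (1 / (2 * γ)) * ‖w - u‖ ^ 2 := by
      have h1 := descent_lemma l l' L hL.le hgrad hlip u w
      have h2 : L / 2 * ‖w - u‖ ^ 2 ≤ (1 / (2 * γ)) * ‖w - u‖ ^ 2 := by
        apply mul_le_mul_of_nonneg_right _ (sq_nonneg _)
        rw [div_le_div_iff₀ two_pos (by positivity)]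
        rw [le_div_iff₀ hγ] at hLγ
        linarith
      linarith
    exact add_le_add_left (EReal.coe_le_coe_iff.mpr hr) (g w)
  · refine le_iInf fun u => iInf_le_of_le u ?_
    rw [fbe_eq_iInf l l' g γ hγ u]
    refine iInf_le_of_le u (le_of_eq ?_)
    simp
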